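/- Let A be a symmetric bilinear form on an n-dimensional Euclidean space with orthonormal eigenbasis e_1,...,e_n and eigenvalues λ_1,...,λ_n. For R = A ⊙∧ id and each p, R(e_p ⊙ e_p) = 2λ_p (e_p ⊙ e_p) − 2λ_p g − Σ_{i=1}^n λ_i e_i ⊙ e_i, where g is the metric (identity matrix). -/
import Mathlib


open Finset

/-- The Kulkarni–Nomizu product `A ⊙∧ id`, acting on two-tensors `φ` by
`(Rφ)_{il} = Σ_{j,k} (A_{ik}δ_{jl} + A_{jl}δ_{ik} − A_{jk}δ_{il} − A_{il}δ_{jk}) φ_{jk}`. -/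
noncomputable def KNid {n : ℕ} (A φ : Matrix (Fin n) (Fin n) ℝ) :
    Matrix (Fin n) (Fin n) ℝ :=
  fun i l => ∑ j : Fin n, ∑ k : Fin n,
    (A i k * (if j = l then (1:ℝ) else 0) + A j l * (if i = k then (1:ℝ) else 0)
      - A j k * (if i = l then (1:ℝ) else 0) - A i l * (if j = k then (1:ℝ) else 0)) * φ j k

/-- The symmetric product `u ⊙ v = u ⊗ v + v ⊗ u` as a matrix. -/
noncomputable def symProd {n : ℕ} (u v : Fin n → ℝ) : Matrix (Fin n) (Fin n) ℝ :=
  fun i j => u i * v j + v i * u j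

theorem stmt1 {n : ℕ} (A : Matrix (Fin n) (Fin n) ℝ) (hA : A.IsSymm)
    (e : Fin n → Fin n → ℝ) (lam : Fin n → ℝ)
    (horth : ∀ p q : Fin n, ∑ i : Fin n, e p i * e q i = if p = q then (1:ℝ) else 0)
    (heig : ∀ p : Fin n, A.mulVec (e p) = lam p • e p)
    (p : Fin n) :
    KNid A (symProd (e p) (e p)) =
      (2 * lam p) • symProd (e p) (e p) - (2 * lam p) • (1 : Matrix (Fin n) (Fin n) ℝ)
        - ∑ i : Fin n, lam i • symProd (e i) (e i) := by
  have hsymm : ∀ i j, A j i = A i j := fun i j => by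
    have := congrFun (congrFun hA i) j
    simpa [Matrix.transpose_apply] using this
  have h1 : ∀ q i, ∑ k, A i k * e q k = lam q * e q i := fun q i => by
    have := congrFun (heig q) i
    simpa [Matrix.mulVec, dotProduct] using this
  have h2 : ∀ l, ∑ j, A j l * e p j = lam p * e p l := fun l => by
    calc ∑ j, A j l * e p j = ∑ j, A l j * e p j := by
          refine Finset.sum_congr rfl fun j _ => by rw [hsymm]
      _ = lam p * e p l := h1 p l
  have h4 : ∑ j, e p j * e p j = (1:ℝ) := by simpa using horth p p
  have h3 : ∑ j, ∑ k, A j k * (e p j * e p k) = lam p := by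
    have : ∀ j, ∑ k, A j k * (e p j * e p k) = e p j * (lam p * e p j) := fun j => by
      rw [← h1 p j, Finset.mul_sum]
      refine Finset.sum_congr rfl fun k _ => by ring
    rw [Finset.sum_congr rfl fun j _ => this j]
    have : ∑ j, e p j * (lam p * e p j) = lam p * ∑ j, e p j * e p j := by
      rw [Finset.mul_sum]; exact Finset.sum_congr rfl fun j _ => by ring
    rw [this, h4, mul_one]
  -- completeness: ∑ q, e q i * e q l = δ_{il}
  have h5 : ∀ i l, ∑ q, e q i * e q l = if i = l then (1:ℝ) else 0 := by
    have hE : (Matrix.of e) * Matrix.transpose (Matrix.of e) = (1 : Matrix (Fin n) (Fin n) ℝ) := by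
      ext a b
      simpa [Matrix.mul_apply, Matrix.one_apply] using horth a b
    have hE' : Matrix.transpose (Matrix.of e) * (Matrix.of e) = 1 := mul_eq_one_comm.mp hE
    intro i l
    have := congrFun (congrFun hE' i) l
    simpa [Matrix.mul_apply, Matrix.one_apply] using this
  -- spectral decomposition entry
  have hspec : ∀ i l, ∑ q, lam q * (e q i * e q l) = A i l := fun i l => by
    calc ∑ q, lam q * (e q i * e q l) = ∑ q, (∑ k, A i k * e q k) * e q l := by
          refine Finset.sum_congr rfl fun q _ => by rw [h1]; ring
      _ = ∑ k, A i k * ∑ q, e q k * e q l := by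
          simp_rw [Finset.sum_mul, Finset.mul_sum]
          rw [Finset.sum_comm]
          exact Finset.sum_congr rfl fun k _ => Finset.sum_congr rfl fun q _ => by ring
      _ = A i l := by
          simp [h5, mul_ite]
  ext i l
  simp only [KNid, symProd, Matrix.sub_apply, Matrix.smul_apply, Matrix.one_apply,
    smul_eq_mul, Finset.sum_apply, Matrix.sum_apply]
  have expand : ∀ j k : Fin n,
      (A i k * (if j = l then (1:ℝ) else 0) + A j l * (if i = k then (1:ℝ) else 0)
        - A j k * (if i = l then (1:ℝ) else 0) - A i l * (if j = k then (1:ℝ) else 0))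
        * (e p j * e p k + e p j * e p k)
      = A i k * (if j = l then (1:ℝ) else 0) * (2 * (e p j * e p k))
        + A j l * (if i = k then (1:ℝ) else 0) * (2 * (e p j * e p k))
        - (if i = l then (1:ℝ) else 0) * (A j k * (2 * (e p j * e p k)))
        - A i l * ((if j = k then (1:ℝ) else 0) * (2 * (e p j * e p k))) := by
    intro j k; ring
  rw [Finset.sum_congr rfl fun j _ => Finset.sum_congr rfl fun k _ => expand j k]
  simp only [Finset.sum_sub_distrib, Finset.sum_add_distrib]
  have T1 : ∑ j : Fin n, ∑ k : Fin n, A i k * (if j = l then (1:ℝ) else 0) * (2 * (e p j * e p k))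
      = 2 * (lam p * e p l * e p i) := by
    rw [Finset.sum_comm]
    have : ∀ k, ∑ j : Fin n, A i k * (if j = l then (1:ℝ) else 0) * (2 * (e p j * e p k))
        = A i k * (2 * (e p l * e p k)) := fun k => by
      simp [ite_mul, mul_ite]
    rw [Finset.sum_congr rfl fun k _ => this k]
    have : ∑ k, A i k * (2 * (e p l * e p k)) = 2 * e p l * ∑ k, A i k * e p k := by
      rw [Finset.mul_sum]; exact Finset.sum_congr rfl fun k _ => by ring
    rw [this, h1]; ring
  have T2 : ∑ j : Fin n, ∑ k : Fin n, A j l * (if i = k then (1:ℝ) else 0) * (2 * (e p j * e p k))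
      = 2 * (lam p * e p l * e p i) := by
    have : ∀ j, ∑ k : Fin n, A j l * (if i = k then (1:ℝ) else 0) * (2 * (e p j * e p k))
        = A j l * (2 * (e p j * e p i)) := fun j => by
      simp [ite_mul, mul_ite, eq_comm]
    rw [Finset.sum_congr rfl fun j _ => this j]
    have : ∑ j, A j l * (2 * (e p j * e p i)) = 2 * e p i * ∑ j, A j l * e p j := by
      rw [Finset.mul_sum]; exact Finset.sum_congr rfl fun j _ => by ring
    rw [this, h2]; ring
  have T3 : ∑ j : Fin n, ∑ k : Fin n, (if i = l then (1:ℝ) else 0) * (A j k * (2 * (e p j * e p k)))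
      = (if i = l then (1:ℝ) else 0) * (2 * lam p) := by
    simp only [← Finset.mul_sum]
    congr 1
    have : ∀ j, ∑ k : Fin n, A j k * (2 * (e p j * e p k)) = 2 * ∑ k, A j k * (e p j * e p k) := fun j => by
      rw [Finset.mul_sum]; exact Finset.sum_congr rfl fun k _ => by ring
    rw [Finset.sum_congr rfl fun j _ => this j, ← Finset.mul_sum, h3]
  have T4 : ∑ j : Fin n, ∑ k : Fin n, A i l * ((if j = k then (1:ℝ) else 0) * (2 * (e p j * e p k)))
      = 2 * A i l := by
    have : ∀ j, ∑ k : Fin n, A i l * ((if j = k then (1:ℝ) else 0) * (2 * (e p j * e p k)))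
        = A i l * (2 * (e p j * e p j)) := fun j => by
      simp [ite_mul, mul_ite]
    rw [Finset.sum_congr rfl fun j _ => this j]
    have : ∑ j, A i l * (2 * (e p j * e p j)) = 2 * A i l * ∑ j, e p j * e p j := by
      rw [Finset.mul_sum]; exact Finset.sum_congr rfl fun j _ => by ring
    rw [this, h4]; ring
  rw [T1, T2, T3, T4]
  have hRHS3 : ∑ q : Fin n, lam q * (e q i * e q l + e q i * e q l) = 2 * A i l := by
    rw [← hspec i l, Finset.mul_sum]
    exact Finset.sum_congr rfl fun q _ => by ring
  rw [hRHS3]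
  by_cases h : i = l <;> simp [h] <;> ring
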